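/- Let (B, I, J) be a stable framed quiver representation (no nonzero B-invariant graded subspace contained in ker J). Then the stabilizer of (B, I, J) in the group G_V = ∏_i GL(V_i) acting by conjugation (g·(B,I,J) = (gBg⁻¹, gI, Jg⁻¹)) is trivial. -/
import Mathlib


/-- For a stable framed quiver representation `(B, I, J)` (no nonzero `B`-invariant
graded subspace contained in `ker J`), the stabilizer in `G_V = ∏ᵢ GL(Vᵢ)` acting by
`g·(B,I,J) = (gBg⁻¹, gI, Jg⁻¹)` is trivial. -/
theorem stable_framed_rep_stabilizer_trivial {K ι E : Type*} [Field K]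
    (s t : E → ι) {V W : ι → Type*}
    [∀ i, AddCommGroup (V i)] [∀ i, Module K (V i)]
    [∀ i, AddCommGroup (W i)] [∀ i, Module K (W i)]
    (B : ∀ e, V (s e) →ₗ[K] V (t e)) (Imap : ∀ i, W i →ₗ[K] V i) (J : ∀ i, V i →ₗ[K] W i)
    (hstable : ∀ U : ∀ i, Submodule K (V i),
      (∀ e, (U (s e)).map (B e) ≤ U (t e)) →
      (∀ i, U i ≤ LinearMap.ker (J i)) → ∀ i, U i = ⊥)
    (g : ∀ i, V i ≃ₗ[K] V i)
    (hB : ∀ e, ((g (t e) : V (t e) →ₗ[K] V (t e)) ∘ₗ B e) ∘ₗ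
        ((g (s e)).symm : V (s e) →ₗ[K] V (s e)) = B e)
    (hI : ∀ i, (g i : V i →ₗ[K] V i) ∘ₗ Imap i = Imap i)
    (hJ : ∀ i, J i ∘ₗ ((g i).symm : V i →ₗ[K] V i) = J i) :
    ∀ i, g i = LinearEquiv.refl K (V i) := by
  have hB' : ∀ e x, g (t e) (B e x) = B e (g (s e) x) := by
    intro e x
    have := congrFun (congrArg DFunLike.coe (hB e)) (g (s e) x)
    simpa using this
  have hJ' : ∀ i x, J i (g i x) = J i x := by
    intro i x
    have := congrFun (congrArg DFunLike.coe (hJ i)) (g i x)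
    simp only [LinearMap.coe_comp, Function.comp_apply, LinearEquiv.coe_coe,
      LinearEquiv.symm_apply_apply] at this
    exact this.symm
  set U : ∀ i, Submodule K (V i) :=
    fun i => LinearMap.range ((g i : V i →ₗ[K] V i) - LinearMap.id) with hU
  have hBU : ∀ e, (U (s e)).map (B e) ≤ U (t e) := by
    intro e y hy
    obtain ⟨x, ⟨z, rfl⟩, rfl⟩ := hy
    refine ⟨B e z, ?_⟩
    simp [map_sub, hB' e z]
  have hJU : ∀ i, U i ≤ LinearMap.ker (J i) := by
    intro i x hx
    obtain ⟨z, rfl⟩ := hx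
    simp [map_sub, hJ' i z]
  have hbot := hstable U hBU hJU
  intro i
  apply LinearEquiv.toLinearMap_injective
  ext x
  have hx : (((g i : V i →ₗ[K] V i) - LinearMap.id : V i →ₗ[K] V i)) x ∈ U i := ⟨x, rfl⟩
  rw [hbot i] at hx
  have : g i x - x = 0 := by simpa using hx
  simpa [sub_eq_zero] using this
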